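/- Let d ≥ 1 and let x₀, x₁, x₂ ∈ ℝ^d. Then the infimum of ∫₀² ‖X''(t)‖² dt over all twice continuously differentiable curves X : [0,2] → ℝ^d with X(0) = x₀, X(1) = x₁, X(2) = x₂ equals (3/2)·‖x₀ − 2x₁ + x₂‖², i.e., 𝒞(x₀,x₁,x₂) = (3/2)·‖x₀ − 2x₁ + x₂‖². -/

import Mathlib

set_option maxHeartbeats 1000000

open MeasureTheory

noncomputable section

namespace Stmt14Aux

open intervalIntegral Filter

lemma hasDerivAt_mul_abs (t : ℝ) : HasDerivAt (fun s : ℝ => s * |s|) (2 * |t|) t := by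
  rcases lt_trichotomy t 0 with h | rfl | h
  · have H : HasDerivAt (fun s : ℝ => -(s*s)) (2*|t|) t := by
      have := ((hasDerivAt_id t).mul (hasDerivAt_id t)).neg
      refine this.congr_deriv ?_
      simp [abs_of_neg h]; ring
    apply H.congr_of_eventuallyEq
    filter_upwards [eventually_lt_nhds h] with s hs
    rw [abs_of_neg hs]; ring
  · rw [hasDerivAt_iff_tendsto_slope]
    have hs0 : ∀ s : ℝ, s ≠ 0 → slope (fun s : ℝ => s * |s|) 0 s = |s| := by
      intro s hs
      simp [slope_def_field, div_eq_iff hs]; ring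
    have habs : Tendsto (fun s : ℝ => |s|) (nhdsWithin 0 {(0:ℝ)}ᶜ) (nhds (2*|(0:ℝ)|)) := by
      have : Tendsto (fun s : ℝ => |s|) (nhds 0) (nhds |(0:ℝ)|) := continuous_abs.tendsto 0
      simpa using this.mono_left nhdsWithin_le_nhds
    apply habs.congr'
    filter_upwards [self_mem_nhdsWithin] with s hs
    exact (hs0 s hs).symm
  · have H : HasDerivAt (fun s : ℝ => s*s) (2*|t|) t := by
      have := (hasDerivAt_id t).mul (hasDerivAt_id t)
      refine this.congr_deriv ?_
      simp [abs_of_pos h]; ring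
    apply H.congr_of_eventuallyEq
    filter_upwards [eventually_gt_nhds h] with s hs
    rw [abs_of_pos hs]

/-- cubic-abs function `t ↦ t² |t|` -/
def cub (t : ℝ) : ℝ := t * (t * |t|)

lemma hasDerivAt_cub (t : ℝ) : HasDerivAt cub (3 * (t * |t|)) t := by
  have := (hasDerivAt_id t).mul (hasDerivAt_mul_abs t)
  refine this.congr_deriv ?_
  simp; ring

/-- the optimal scalar profile -/
def sf (t : ℝ) : ℝ := 3/4 * t^2 - 1/4 * cub (t-1)

def sf' (t : ℝ) : ℝ := 3/2 * t - 3/4 * ((t-1) * |t-1|)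

def sf'' (t : ℝ) : ℝ := 3/2 - 3/2 * |t-1|

lemma hasDerivAt_sf (t : ℝ) : HasDerivAt sf (sf' t) t := by
  have h1 : HasDerivAt (fun t : ℝ => 3/4 * t^2) (3/2 * t) t := by
    have := (hasDerivAt_pow 2 t).const_mul (3/4 : ℝ)
    refine this.congr_deriv ?_; ring
  have h2 : HasDerivAt (fun t : ℝ => cub (t-1)) (3 * ((t-1) * |t-1|)) t := by
    have := (hasDerivAt_cub (t-1)).comp t ((hasDerivAt_id t).sub_const 1)
    refine this.congr_deriv ?_; ring
  have := h1.sub (h2.const_mul (1/4 : ℝ))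
  refine this.congr_deriv ?_
  unfold sf'; ring

lemma hasDerivAt_sf' (t : ℝ) : HasDerivAt sf' (sf'' t) t := by
  have h1 : HasDerivAt (fun t : ℝ => 3/2 * t) (3/2 : ℝ) t := by
    simpa using (hasDerivAt_id t).const_mul (3/2 : ℝ)
  have h2 : HasDerivAt (fun t : ℝ => (t-1) * |t-1|) (2 * |t-1|) t := by
    have := (hasDerivAt_mul_abs (t-1)).comp t ((hasDerivAt_id t).sub_const 1)
    refine this.congr_deriv ?_; ring
  have := h1.sub (h2.const_mul (3/4 : ℝ))
  refine this.congr_deriv ?_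
  unfold sf''; ring

lemma continuous_sf'' : Continuous sf'' := by
  unfold sf''; continuity

lemma hat_sq_integral : ∫ t in (0:ℝ)..2, (sf'' t)^2 = 3/2 := by
  unfold sf''
  rw [← intervalIntegral.integral_add_adjacent_intervals (a := (0:ℝ)) (b := 1) (c := 2)
      (by apply Continuous.intervalIntegrable; continuity)
      (by apply Continuous.intervalIntegrable; continuity)]
  have h1 : ∫ t in (0:ℝ)..1, (3/2 - 3/2*|t-1|)^2 = ∫ t in (0:ℝ)..1, (9/4) * t^2 := by
    apply intervalIntegral.integral_congr
    intro t ht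
    rw [Set.uIcc_of_le (by norm_num)] at ht
    dsimp only
    rw [abs_of_nonpos (by linarith [ht.2])]
    ring
  have h2 : ∫ t in (1:ℝ)..2, (3/2 - 3/2*|t-1|)^2 = ∫ t in (1:ℝ)..2, (9/4) * (2-t)^2 := by
    apply intervalIntegral.integral_congr
    intro t ht
    rw [Set.uIcc_of_le (by norm_num)] at ht
    dsimp only
    rw [abs_of_nonneg (by linarith [ht.1])]
    ring
  rw [h1, h2]
  have e1 : ∫ t in (0:ℝ)..1, (9/4) * t^2 = 3/4 := by
    rw [intervalIntegral.integral_const_mul, integral_pow]; norm_num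
  have e2 : ∫ t in (1:ℝ)..2, (9/4) * (2-t)^2 = 3/4 := by
    have h : ∀ t : ℝ, (9/4) * (2-t)^2 = (9/4)*t^2 - 9*t + 9 := by intro t; ring
    simp_rw [h]
    rw [intervalIntegral.integral_add, intervalIntegral.integral_sub,
        intervalIntegral.integral_const_mul, intervalIntegral.integral_const_mul,
        integral_pow, integral_id, intervalIntegral.integral_const]
    · norm_num
    all_goals apply Continuous.intervalIntegrable; continuity
  rw [e1, e2]; norm_num

lemma g_integral {E : Type*} [NormedAddCommGroup E] [NormedSpace ℝ E] (Δ : E) :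
    ∫ t in (0:ℝ)..2, ‖sf'' t • Δ‖^2 = 3/2 * ‖Δ‖^2 := by
  have h : ∀ t : ℝ, ‖sf'' t • Δ‖^2 = (sf'' t)^2 * ‖Δ‖^2 := by
    intro t
    rw [norm_smul, mul_pow, Real.norm_eq_abs, sq_abs]
  simp_rw [h]
  rw [intervalIntegral.integral_mul_const, hat_sq_integral]

end Stmt14Aux

open Stmt14Aux

/-- For `N = 2`, the infimum `𝒞(x₀,x₁,x₂)` of `∫₀² ‖X''‖²` over C² curves with
`X(0) = x₀`, `X(1) = x₁`, `X(2) = x₂` equals `(3/2)‖x₀ − 2x₁ + x₂‖²`. -/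
theorem stmt14 (d : ℕ) (hd : 1 ≤ d) (x₀ x₁ x₂ : EuclideanSpace ℝ (Fin d)) :
    sInf { y : ℝ | ∃ X : ℝ → EuclideanSpace ℝ (Fin d), ContDiff ℝ 2 X ∧
        X 0 = x₀ ∧ X 1 = x₁ ∧ X 2 = x₂ ∧
        y = ∫ t in (0:ℝ)..2, ‖deriv (deriv X) t‖ ^ 2 }
      = (3 / 2) * ‖x₀ - (2:ℝ) • x₁ + x₂‖ ^ 2 := by
  classical
  set Δ : EuclideanSpace ℝ (Fin d) := x₀ - (2:ℝ) • x₁ + x₂ with hΔ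
  set S := { y : ℝ | ∃ X : ℝ → EuclideanSpace ℝ (Fin d), ContDiff ℝ 2 X ∧
        X 0 = x₀ ∧ X 1 = x₁ ∧ X 2 = x₂ ∧
        y = ∫ t in (0:ℝ)..2, ‖deriv (deriv X) t‖ ^ 2 } with hS
  -- the witness curve
  have hmem : (3/2) * ‖Δ‖^2 ∈ S := by
    set c₁ : EuclideanSpace ℝ (Fin d) := x₁ - x₀ - Δ with hc₁
    set X : ℝ → EuclideanSpace ℝ (Fin d) := fun t => (x₀ + (4⁻¹:ℝ) • Δ) + t • c₁ + sf t • Δ with hX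
    have hdX : ∀ t : ℝ, HasDerivAt X (c₁ + sf' t • Δ) t := by
      intro t
      have h1 : HasDerivAt (fun t : ℝ => t • c₁) ((1:ℝ) • c₁) t :=
        (hasDerivAt_id t).smul_const c₁
      have h2 : HasDerivAt (fun t : ℝ => sf t • Δ) (sf' t • Δ) t :=
        (hasDerivAt_sf t).smul_const Δ
      have := ((hasDerivAt_const t (x₀ + (4⁻¹:ℝ) • Δ)).add h1).add h2
      refine this.congr_deriv ?_
      simp
    have hderivX : deriv X = fun t => c₁ + sf' t • Δ := funext fun t => (hdX t).deriv
    have hdX2 : ∀ t : ℝ, HasDerivAt (deriv X) (sf'' t • Δ) t := by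
      intro t
      rw [hderivX]
      have h2 : HasDerivAt (fun t : ℝ => sf' t • Δ) (sf'' t • Δ) t :=
        (hasDerivAt_sf' t).smul_const Δ
      simpa using h2
    have hderivX2 : deriv (deriv X) = fun t => sf'' t • Δ := funext fun t => (hdX2 t).deriv
    have hCD : ContDiff ℝ 2 X := by
      rw [show (2 : WithTop ℕ∞) = 1 + 1 by norm_num, contDiff_succ_iff_deriv]
      refine ⟨fun t => (hdX t).differentiableAt, by simp, ?_⟩
      rw [contDiff_one_iff_deriv]
      refine ⟨fun t => (hdX2 t).differentiableAt, ?_⟩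
      rw [hderivX2]
      exact (continuous_sf''.smul continuous_const)
    refine ⟨X, hCD, ?_, ?_, ?_, ?_⟩
    · -- X 0 = x₀
      have hsf0 : sf 0 = -(4⁻¹ : ℝ) := by unfold sf cub; norm_num
      rw [hX]; dsimp only
      rw [hsf0]
      module
    · have hsf1 : sf 1 = 3/4 := by unfold sf cub; norm_num
      rw [hX]; dsimp only
      rw [hsf1, hc₁, hΔ]
      module
    · have hsf2 : sf 2 = 11/4 := by unfold sf cub; norm_num
      rw [hX]; dsimp only
      rw [hsf2, hc₁, hΔ]
      module
    · rw [hderivX2]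
      exact (g_integral Δ).symm
  -- lower bound
  have hlb : ∀ y ∈ S, (3/2) * ‖Δ‖^2 ≤ y := by
    rintro y ⟨X, hCD, h0, h1, h2, rfl⟩
    set f : ℝ → EuclideanSpace ℝ (Fin d) := deriv (deriv X) with hf
    have hX1 : ContDiff ℝ 1 (deriv X) := by
      have hCD' : ContDiff ℝ ((1:WithTop ℕ∞) + 1) X := by
        rw [show ((1:WithTop ℕ∞) + 1) = 2 by norm_num]; exact hCD
      exact (contDiff_succ_iff_deriv.mp hCD').2.2
    have hdX : ∀ t : ℝ, HasDerivAt X (deriv X t) t := fun t =>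
      ((hCD.differentiable (by norm_num)) t).hasDerivAt
    have hdX2 : ∀ t : ℝ, HasDerivAt (deriv X) (f t) t := fun t =>
      ((hX1.differentiable one_ne_zero) t).hasDerivAt
    have hfc : Continuous f := (contDiff_one_iff_deriv.mp hX1).2
    have hXc : Continuous (deriv X) := hX1.continuous
    -- FTC identities
    have I1 : ∫ t in (0:ℝ)..1, t • f t = deriv X 1 - x₁ + x₀ := by
      have hD : ∀ t ∈ Set.uIcc (0:ℝ) 1,
          HasDerivAt (fun t : ℝ => t • deriv X t - X t) (t • f t) t := by
        intro t _
        have := (((hasDerivAt_id t).smul (hdX2 t)).sub (hdX t))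
        refine this.congr_deriv ?_
        simp
      have hint : IntervalIntegrable (fun t : ℝ => t • f t) volume 0 1 :=
        (continuous_id.smul hfc).intervalIntegrable _ _
      have := intervalIntegral.integral_eq_sub_of_hasDerivAt hD hint
      rw [this, h0, h1]
      module
    have I2 : ∫ t in (1:ℝ)..2, (t-2) • f t = deriv X 1 + x₁ - x₂ := by
      have hD : ∀ t ∈ Set.uIcc (1:ℝ) 2,
          HasDerivAt (fun t : ℝ => (t-2) • deriv X t - X t) ((t-2) • f t) t := by
        intro t _
        have := ((((hasDerivAt_id t).sub_const 2).smul (hdX2 t)).sub (hdX t))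
        refine this.congr_deriv ?_
        simp
      have hint : IntervalIntegrable (fun t : ℝ => (t-2) • f t) volume 1 2 :=
        ((continuous_id.sub continuous_const).smul hfc).intervalIntegrable _ _
      have := intervalIntegral.integral_eq_sub_of_hasDerivAt hD hint
      rw [this, h1, h2]
      module
    have key : (∫ t in (0:ℝ)..1, t • f t) + (∫ t in (1:ℝ)..2, (2-t) • f t) = Δ := by
      have hneg : (∫ t in (1:ℝ)..2, (2-t) • f t) = -∫ t in (1:ℝ)..2, (t-2) • f t := by
        rw [← intervalIntegral.integral_neg]
        congr 1
        funext t
        module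
      rw [hneg, I1, I2, hΔ]
      module
    -- inner product integral
    set L : EuclideanSpace ℝ (Fin d) →L[ℝ] ℝ := innerSL ℝ Δ with hL
    have J : ∫ t in (0:ℝ)..2, (inner ℝ (f t) (sf'' t • Δ) : ℝ) = 3/2 * ‖Δ‖^2 := by
      rw [← intervalIntegral.integral_add_adjacent_intervals (a := (0:ℝ)) (b := 1) (c := 2)
          (((hfc.inner (continuous_sf''.smul continuous_const)).intervalIntegrable _ _))
          (((hfc.inner (continuous_sf''.smul continuous_const)).intervalIntegrable _ _))]
      have e1 : ∫ t in (0:ℝ)..1, (inner ℝ (f t) (sf'' t • Δ) : ℝ)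
          = ∫ t in (0:ℝ)..1, (3/2) * L (t • f t) := by
        apply intervalIntegral.integral_congr
        intro t ht
        rw [Set.uIcc_of_le (by norm_num)] at ht
        dsimp only
        have hsf : sf'' t = 3/2 * t := by
          unfold sf''
          rw [abs_of_nonpos (by linarith [ht.2])]
          ring
        rw [hsf, hL, innerSL_apply_apply, real_inner_smul_right, real_inner_smul_right,
          real_inner_comm]
        ring
      have e2 : ∫ t in (1:ℝ)..2, (inner ℝ (f t) (sf'' t • Δ) : ℝ)
          = ∫ t in (1:ℝ)..2, (3/2) * L ((2-t) • f t) := by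
        apply intervalIntegral.integral_congr
        intro t ht
        rw [Set.uIcc_of_le (by norm_num)] at ht
        dsimp only
        have hsf : sf'' t = 3/2 * (2-t) := by
          unfold sf''
          rw [abs_of_nonneg (by linarith [ht.1])]
          ring
        rw [hsf, hL, innerSL_apply_apply, real_inner_smul_right, real_inner_smul_right,
          real_inner_comm]
        ring
      have hi1 : IntervalIntegrable (fun t : ℝ => t • f t) volume 0 1 :=
        (continuous_id.smul hfc).intervalIntegrable _ _
      have hi2 : IntervalIntegrable (fun t : ℝ => (2-t) • f t) volume 1 2 :=
        ((continuous_const.sub continuous_id).smul hfc).intervalIntegrable _ _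
      rw [e1, e2, intervalIntegral.integral_const_mul, intervalIntegral.integral_const_mul,
          L.intervalIntegral_comp_comm hi1, L.intervalIntegral_comp_comm hi2]
      rw [← mul_add, ← map_add, key, hL]
      simp only [innerSL_apply_apply, real_inner_self_eq_norm_sq]
    -- expansion and conclusion
    have hint1 : IntervalIntegrable (fun t => ‖f t - sf'' t • Δ‖^2) volume 0 2 :=
      (((hfc.sub (continuous_sf''.smul continuous_const)).norm.pow 2)).intervalIntegrable _ _
    have hint2 : IntervalIntegrable (fun t => (inner ℝ (f t) (sf'' t • Δ) : ℝ)) volume 0 2 :=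
      (hfc.inner (continuous_sf''.smul continuous_const)).intervalIntegrable _ _
    have hint3 : IntervalIntegrable (fun t => ‖sf'' t • Δ‖^2) volume 0 2 :=
      ((continuous_sf''.smul continuous_const).norm.pow 2).intervalIntegrable _ _
    have expand : (fun t => ‖f t‖^2)
        = fun t => (‖f t - sf'' t • Δ‖^2 + 2 * (inner ℝ (f t) (sf'' t • Δ) : ℝ))
            - ‖sf'' t • Δ‖^2 := by
      funext t
      have := norm_sub_sq_real (f t) (sf'' t • Δ)
      linarith
    rw [expand, intervalIntegral.integral_sub (by
          exact hint1.add (hint2.const_mul 2)) hint3,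
        intervalIntegral.integral_add hint1 (hint2.const_mul 2),
        intervalIntegral.integral_const_mul, J, g_integral]
    have hnn : 0 ≤ ∫ t in (0:ℝ)..2, ‖f t - sf'' t • Δ‖^2 :=
      intervalIntegral.integral_nonneg (by norm_num) (fun t _ => by positivity)
    nlinarith [hnn]
  exact le_antisymm (csInf_le ⟨(3/2) * ‖Δ‖^2, hlb⟩ hmem) (le_csInf ⟨_, hmem⟩ hlb)
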